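/- For any nontrivial additive character ψ of 𝔽_q, any multiplicative character χ of 𝔽_q^×, and positive integers b_1,…,b_n, one has ∑_{a ∈ 𝔽_q^×} χ(a) Kl_a^n(ψ; b_1,…,b_n) = ∏_{i=1}^n G(χ^{b_i}, ψ), where G denotes the Gauss sum. -/
import Mathlib


/-- The generalized Kloosterman sum Kl_a^n(ψ; b₁, …, b_n)
= ∑_{x₁^{b₁} ⋯ x_n^{b_n} = a} ψ(x₁ + ⋯ + x_n). -/
noncomputable def Kl {F : Type*} [Field F] [Fintype F] [DecidableEq F]
    (ψ : AddChar F ℂ) (n : ℕ) (b : Fin n → ℕ) (a : F) : ℂ :=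
  ∑ x ∈ Finset.univ.filter (fun x : Fin n → F => ∏ i, x i ^ b i = a), ψ (∑ i, x i)

/-- Gauss sum over the units of a finite field. -/
noncomputable def GaussSumUnits {F : Type*} [Field F] [Fintype F] [DecidableEq F]
    (χ : MulChar F ℂ) (ψ : AddChar F ℂ) : ℂ :=
  ∑ t : Fˣ, χ (t : F) * ψ (t : F)

lemma sum_units_eq_aux {F : Type*} [Field F] [Fintype F] [DecidableEq F]
    (h : F → ℂ) (h0 : h 0 = 0) : ∑ t : Fˣ, h (t : F) = ∑ t : F, h t := by
  rw [← Finset.sum_image (g := (Units.val : Fˣ → F)) (f := h)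
    (fun a _ b _ hab => Units.ext hab)]
  apply Finset.sum_subset (Finset.subset_univ _)
  intro t _ ht
  rcases eq_or_ne t 0 with rfl | h'
  · exact h0
  · exact absurd (Finset.mem_image.mpr ⟨Units.mk0 t h', Finset.mem_univ _, rfl⟩) ht

lemma addChar_map_sum {F : Type*} [Field F] {ι : Type*} (ψ : AddChar F ℂ)
    (s : Finset ι) (f : ι → F) : ψ (∑ i ∈ s, f i) = ∏ i ∈ s, ψ (f i) := by
  induction s using Finset.cons_induction with
  | empty => simp
  | cons a s h ih => simp [Finset.sum_cons, Finset.prod_cons, AddChar.map_add_eq_mul, ih]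

/-- ∑_{a ∈ 𝔽_q^×} χ(a) Kl_a^n(ψ; b₁, …, b_n) = ∏_{i=1}^n G(χ^{bᵢ}, ψ). -/
theorem stmt4 {F : Type*} [Field F] [Fintype F] [DecidableEq F]
    (ψ : AddChar F ℂ) (hψ : ψ ≠ 1) (χ : MulChar F ℂ) (n : ℕ)
    (b : Fin n → ℕ) (hb : ∀ i, 0 < b i) :
    ∑ a : Fˣ, χ (a : F) * Kl ψ n b (a : F) = ∏ i, GaussSumUnits (χ ^ b i) ψ := by
  classical
  set g : (Fin n → F) → ℂ := fun x => χ (∏ i, x i ^ b i) * ψ (∑ i, x i) with hg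
  have key : ∀ a : F, χ a * Kl ψ n b a
      = ∑ x ∈ Finset.univ.filter (fun x : Fin n → F => ∏ i, x i ^ b i = a), g x := by
    intro a
    rw [Kl, Finset.mul_sum]
    refine Finset.sum_congr rfl fun x hx => ?_
    simp only [Finset.mem_filter] at hx
    rw [hg]
    simp only [hx.2]
  have lhs : ∑ a : Fˣ, χ (a : F) * Kl ψ n b (a : F) = ∑ x : Fin n → F, g x := by
    rw [sum_units_eq_aux (fun a => χ a * Kl ψ n b a)
      (by show χ (0:F) * Kl ψ n b 0 = 0
          rw [MulChar.map_nonunit χ not_isUnit_zero, zero_mul])]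
    simp only [key]
    exact Finset.sum_fiberwise _ _ _
  have rhs : ∀ i, GaussSumUnits (χ ^ b i) ψ = ∑ t : F, (χ ^ b i) t * ψ t := fun i =>
    sum_units_eq_aux (fun t => (χ ^ b i) t * ψ t)
      (by show (χ ^ b i) (0:F) * ψ 0 = 0
          rw [MulChar.map_nonunit _ not_isUnit_zero, zero_mul])
  rw [lhs]
  simp only [rhs]
  rw [Finset.prod_univ_sum]
  rw [Fintype.piFinset_univ]
  refine Finset.sum_congr rfl fun x _ => ?_
  show χ (∏ i, x i ^ b i) * ψ (∑ i, x i) = ∏ i, (χ ^ b i) (x i) * ψ (x i)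
  rw [map_prod, addChar_map_sum, ← Finset.prod_mul_distrib]
  refine Finset.prod_congr rfl fun i _ => ?_
  rw [MulChar.pow_apply' χ (hb i).ne' (x i), map_pow]
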